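/- Let Φ_n, Φ_{n−1} be polynomials of degrees n, n−1, ρ a polynomial, and suppose ρΦ_n' = (A_n x + B_n)Φ_n + C_n Φ_{n−1} and ρΦ_{n−1}' = (D_n x + E_n)Φ_{n−1} + F_n Φ_n for constants A_n,…,F_n with D_n ≠ A_n. Let Φ_{n;c} = Φ_n + cΦ_{n−1} for c ≠ 0 and l_n the leading coefficient of Φ_n. Then disc(Φ_{n;c}) = (−1)^{n(n+1)/2} (D_n − A_n)^n c^n / (l_n^{2−deg ρ} Res(Φ_{n;c}, ρ)) · Res(Φ_n, Φ_{n−1}) · Φ_{n;c}(ξ), where ξ = (F_n c² + (B_n − E_n)c − C_n)/((D_n − A_n)c), provided Res(Φ_{n;c}, ρ) ≠ 0. -/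

import Mathlib

open Polynomial

/-- The resultant: `Res f g = lc(f)^(deg g) * ∏_{α root of f} g(α)`. -/
noncomputable def Res (f g : Polynomial ℂ) : ℂ :=
  f.leadingCoeff ^ g.natDegree * (f.roots.map (fun a => g.eval a)).prod

/-- The discriminant of a polynomial. -/
noncomputable def disc (f : Polynomial ℂ) : ℂ :=
  (-1) ^ (f.natDegree * (f.natDegree - 1) / 2) / f.leadingCoeff * Res f (derivative f)

private lemma eval_eq_lc_prod (p : Polynomial ℂ) (x : ℂ) :
    p.eval x = p.leadingCoeff * (p.roots.map (fun a => x - a)).prod := by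
  by_cases hp : p = 0; · simp [hp]
  conv_lhs => rw [(IsAlgClosed.splits p).eq_prod_roots]
  simp [Polynomial.eval_multiset_prod, Multiset.map_map, Function.comp]

private lemma prod_const_mul (s : Multiset ℂ) (k : ℂ) (f : ℂ → ℂ) :
    (s.map (fun a => k * f a)).prod = k ^ Multiset.card s * (s.map f).prod := by
  induction s using Multiset.induction_on with
  | empty => simp
  | cons a s ih => simp [ih]; ring

private lemma prod_swap' (s t : Multiset ℂ) (f : ℂ → ℂ → ℂ) :
    (s.map (fun a => (t.map (f a)).prod)).prod
      = (t.map (fun b => (s.map (fun a => f a b)).prod)).prod := by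
  induction s using Multiset.induction_on with
  | empty => simp
  | cons a s ih => simp [ih, ← Multiset.prod_map_mul]

private lemma prod_flip (s : Multiset ℂ) (x : ℂ) :
    (s.map (fun a => a - x)).prod = (-1) ^ Multiset.card s * (s.map (fun a => x - a)).prod := by
  have h : (s.map (fun a => a - x)) = s.map (fun a => (-1) * (x - a)) :=
    Multiset.map_congr rfl (by intros; ring)
  rw [h, prod_const_mul]

/-- product of evals of `q` over the roots of `p`, in terms of the swapped product. -/
private lemma prod_eval_eq (q p : Polynomial ℂ) (hp : p ≠ 0) :
    (p.roots.map (fun a => q.eval a)).prod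
      = q.leadingCoeff ^ Multiset.card p.roots
        * ((-1) ^ (Multiset.card p.roots * Multiset.card q.roots)
          * ((q.roots.map (fun b => p.eval b)).prod / p.leadingCoeff ^ Multiset.card q.roots)) := by
  have hL : p.leadingCoeff ≠ 0 := leadingCoeff_ne_zero.mpr hp
  have h1 : (p.roots.map (fun a => q.eval a)).prod
      = q.leadingCoeff ^ Multiset.card p.roots
        * (p.roots.map (fun a => (q.roots.map (fun b => a - b)).prod)).prod := by
    rw [← prod_const_mul]
    exact congrArg _ (Multiset.map_congr rfl (fun a _ => eval_eq_lc_prod q a))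
  rw [h1, prod_swap']
  congr 1
  have h2 : ∀ b : ℂ, (p.roots.map (fun a => a - b)).prod
      = (-1) ^ Multiset.card p.roots * (p.eval b / p.leadingCoeff) := by
    intro b
    rw [prod_flip, eval_eq_lc_prod p b]
    field_simp
  calc (q.roots.map (fun b => (p.roots.map (fun a => a - b)).prod)).prod
      = (q.roots.map (fun b => (-1) ^ Multiset.card p.roots * (p.eval b / p.leadingCoeff))).prod :=
        congrArg _ (Multiset.map_congr rfl (fun b _ => h2 b))
    _ = ((-1) ^ Multiset.card p.roots) ^ Multiset.card q.roots
          * (q.roots.map (fun b => p.eval b / p.leadingCoeff)).prod := prod_const_mul _ _ _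
    _ = (-1) ^ (Multiset.card p.roots * Multiset.card q.roots)
          * ((q.roots.map (fun b => p.eval b)).prod / p.leadingCoeff ^ Multiset.card q.roots) := by
        rw [← pow_mul, Multiset.prod_map_div]
        congr 2
        rw [Multiset.map_const', Multiset.prod_replicate]

private lemma final_alg (L Pρ P1 Pξ K c' : ℂ) (dρ m : ℕ) (hL : L ≠ 0) (hPρ : Pρ ≠ 0) :
    (-1 : ℂ) ^ ((m + 1) * m / 2) / L * (L ^ m * ((K * c') ^ (m + 1) * (P1 * Pξ) / Pρ)) =
      (-1) ^ ((m + 1) * (m + 1 + 1) / 2) * K ^ (m + 1) * c' ^ (m + 1) /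
          (L ^ ((2 : ℤ) - dρ) * (L ^ dρ * Pρ)) *
        (L ^ m * P1) * ((-1) ^ (m + 1) * (L * Pξ)) := by
  have hsign : (-1 : ℂ) ^ ((m + 1) * (m + 1 + 1) / 2)
      = (-1) ^ ((m + 1) * m / 2) * (-1) ^ (m + 1) := by
    rw [← pow_add]; congr 1
    have h : (m + 1) * (m + 1 + 1) = (m + 1) * m + (m + 1) * 2 := by ring
    omega
  rw [hsign, zpow_sub₀ hL, show ((2 : ℤ)) = ((2 : ℕ) : ℤ) from rfl, zpow_natCast, zpow_natCast]
  have h2 : ((-1 : ℂ)) ^ (m + 1) * (-1) ^ (m + 1) = 1 := by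
    rw [← pow_add]; exact Even.neg_one_pow ⟨m + 1, rfl⟩
  field_simp
  linear_combination
    (-(K ^ (m + 1) * c' ^ (m + 1) * P1 * Pξ)) * h2

theorem stmt_11 (n : ℕ) (hn : 1 ≤ n) (Φn Φn1 ρ : Polynomial ℂ)
    (hΦn : Φn.natDegree = n) (hΦn1 : Φn1.natDegree = n - 1)
    (A B Cn D E F : ℂ) (hDA : D ≠ A)
    (hder1 : ρ * derivative Φn = (C A * X + C B) * Φn + C Cn * Φn1)
    (hder2 : ρ * derivative Φn1 = (C D * X + C E) * Φn1 + C F * Φn)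
    (c : ℂ) (hc : c ≠ 0)
    (hres : Res (Φn + C c * Φn1) ρ ≠ 0) :
    disc (Φn + C c * Φn1) =
      (-1) ^ (n * (n + 1) / 2) * (D - A) ^ n * c ^ n /
          (Φn.leadingCoeff ^ ((2 : ℤ) - ρ.natDegree) * Res (Φn + C c * Φn1) ρ) *
        Res Φn Φn1 *
        (Φn + C c * Φn1).eval ((F * c ^ 2 + (B - E) * c - Cn) / ((D - A) * c)) := by
  obtain ⟨m, rfl⟩ : ∃ m, n = m + 1 := ⟨n - 1, by omega⟩
  set Φ : Polynomial ℂ := Φn + C c * Φn1 with hΦdef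
  set ξ : ℂ := (F * c ^ 2 + (B - E) * c - Cn) / ((D - A) * c) with hξdef
  have hm : Φn1.natDegree = m := by omega
  have hΦn0 : Φn ≠ 0 := fun h => by simp [h] at hΦn
  have hL : Φn.leadingCoeff ≠ 0 := leadingCoeff_ne_zero.mpr hΦn0
  have hdlt : (C c * Φn1).degree < Φn.degree := by
    apply lt_of_le_of_lt _ (degree_lt_degree (by omega : Φn1.natDegree < Φn.natDegree))
    rw [← smul_eq_C_mul]; exact degree_smul_le c Φn1
  have hΦdeg : Φ.natDegree = m + 1 := by
    rw [hΦdef]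
    have := degree_add_eq_left_of_degree_lt hdlt
    rw [← hΦn]; exact natDegree_eq_of_degree_eq_some (this.trans (degree_eq_natDegree hΦn0))
  have hΦ0 : Φ ≠ 0 := fun h => by simp [h] at hΦdeg
  have hLΦ : Φ.leadingCoeff = Φn.leadingCoeff := by
    rw [hΦdef, add_comm]; exact leadingCoeff_add_of_degree_lt hdlt
  have hcard : Multiset.card Φ.roots = m + 1 := by
    rw [splits_iff_card_roots.mp (IsAlgClosed.splits Φ), hΦdeg]
  have hDAs : D - A ≠ 0 := sub_ne_zero.mpr hDA
  have hDAc : (D - A) * c ≠ 0 := mul_ne_zero hDAs hc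
  -- pointwise identity at roots of Φ
  have key : ∀ α ∈ Φ.roots,
      ρ.eval α * (derivative Φ).eval α = ((D - A) * c) * (Φn1.eval α * (α - ξ)) := by
    intro α hα
    have h0 : Φn.eval α + c * Φn1.eval α = 0 := by
      have := (mem_roots hΦ0).mp hα
      simpa [hΦdef, IsRoot] using this
    have e1 := congrArg (eval α) hder1
    have e2 := congrArg (eval α) hder2
    simp only [eval_mul, eval_add, eval_C, eval_X] at e1 e2
    have hder : (derivative Φ).eval α
        = (derivative Φn).eval α + c * (derivative Φn1).eval α := by
      simp [hΦdef, derivative_add, derivative_C_mul]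
    have hξ' : (D - A) * c * ξ = F * c ^ 2 + (B - E) * c - Cn := by
      rw [hξdef, mul_comm ((D - A) * c), div_mul_cancel₀ _ hDAc]
    rw [hder]
    linear_combination e1 + c * e2 + (A * α + B + c * F) * h0 + eval α Φn1 * hξ'
  -- product identity
  set Pρ : ℂ := (Φ.roots.map (fun a => ρ.eval a)).prod with hPρdef
  set P' : ℂ := (Φ.roots.map (fun a => (derivative Φ).eval a)).prod with hP'def
  set P1 : ℂ := (Φ.roots.map (fun a => Φn1.eval a)).prod with hP1def
  set Pξ : ℂ := (Φ.roots.map (fun a => a - ξ)).prod with hPξdef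
  have hprod : Pρ * P' = ((D - A) * c) ^ (m + 1) * (P1 * Pξ) := by
    rw [hPρdef, hP'def, hP1def, hPξdef, ← Multiset.prod_map_mul, ← Multiset.prod_map_mul,
      ← hcard, ← prod_const_mul]
    exact congrArg _ (Multiset.map_congr rfl key)
  have hResρ : Res Φ ρ = Φn.leadingCoeff ^ ρ.natDegree * Pρ := by
    rw [Res, hLΦ]
  have hPρ0 : Pρ ≠ 0 := by
    intro h
    exact hres (by rw [hResρ, h, mul_zero])
  have hP' : P' = ((D - A) * c) ^ (m + 1) * (P1 * Pξ) / Pρ := by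
    rw [eq_div_iff hPρ0]; linear_combination hprod
  -- the key resultant identity
  have hcardn : Multiset.card Φn.roots = m + 1 := by
    rw [splits_iff_card_roots.mp (IsAlgClosed.splits Φn), hΦn]
  have hkey3 : Φn.leadingCoeff ^ m * P1 = Res Φn Φn1 := by
    by_cases h1 : Φn1 = 0
    · have hmem : (0 : ℂ) ∈ Φ.roots.map (fun a => Φn1.eval a) := by
        obtain ⟨a, ha⟩ := Multiset.card_pos_iff_exists_mem.mp (by rw [hcard]; omega)
        exact Multiset.mem_map.mpr ⟨a, ha, by simp [h1]⟩
      have hmem2 : (0 : ℂ) ∈ Φn.roots.map (fun a => Φn1.eval a) := by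
        obtain ⟨a, ha⟩ := Multiset.card_pos_iff_exists_mem.mp (by rw [hcardn]; omega)
        exact Multiset.mem_map.mpr ⟨a, ha, by simp [h1]⟩
      rw [hP1def, Res, Multiset.prod_eq_zero hmem, Multiset.prod_eq_zero hmem2]
      simp
    · have hcardt : Multiset.card Φn1.roots = m := by
        rw [splits_iff_card_roots.mp (IsAlgClosed.splits Φn1), hm]
      have hA := prod_eval_eq Φn1 Φ hΦ0
      have hB := prod_eval_eq Φn1 Φn hΦn0
      rw [hcard, hcardt, hLΦ] at hA
      rw [hcardn, hcardt] at hB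
      have hsame : (Φn1.roots.map (fun b => Φ.eval b)).prod
          = (Φn1.roots.map (fun b => Φn.eval b)).prod := by
        refine congrArg _ (Multiset.map_congr rfl (fun b hb => ?_))
        have hb0 : Φn1.eval b = 0 := (mem_roots h1).mp hb
        simp [hΦdef, hb0]
      rw [hP1def, hA, hsame, ← hB, Res, hm]
  have hEξ : Φ.eval ξ = (-1) ^ (m + 1) * (Φn.leadingCoeff * Pξ) := by
    have h5 : Φn.leadingCoeff * Pξ = (-1) ^ (m + 1) * Φ.eval ξ := by
      rw [hPξdef, prod_flip, hcard, eval_eq_lc_prod Φ ξ, hLΦ]; ring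
    have : ((-1 : ℂ) ^ (m + 1)) * ((-1) ^ (m + 1)) = 1 := by
      rw [← pow_add]
      exact Even.neg_one_pow ⟨m + 1, rfl⟩
    calc Φ.eval ξ = (((-1 : ℂ) ^ (m + 1)) * ((-1) ^ (m + 1))) * Φ.eval ξ := by rw [this, one_mul]
      _ = (-1) ^ (m + 1) * (Φn.leadingCoeff * Pξ) := by rw [mul_assoc, ← h5]
  have hdeg' : (derivative Φ).natDegree = m := by
    have := degree_derivative_eq Φ (by rw [hΦdeg]; omega)
    rw [hΦdeg] at this
    exact natDegree_eq_of_degree_eq_some (by simpa using this)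
  have hResΦ' : Res Φ (derivative Φ) = Φn.leadingCoeff ^ m * P' := by
    rw [Res, hdeg', hLΦ]
  rw [disc, hResΦ', hΦdeg, hLΦ, hResρ, hEξ, ← hkey3, hP']
  simpa using final_alg Φn.leadingCoeff Pρ P1 Pξ (D - A) c ρ.natDegree m hL hPρ0
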